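/- Let α > 0, μ > 0 and h ∈ (0,1). For y distributed according to the negative binomial pmf f(·; μh, α), the following two identities hold: (i) ∑_{y=0}^∞ f(y; μh, α) · [ y/h − (α+y) μ / (α+μh) ] = 0, and (ii) ∑_{y=0}^∞ f(y; μh, α) · [ y/h^2 − (α+y) μ^2 / (α+μh)^2 ] = μ / ( h (1 + α^{-1} μ h) ). Hence the (β,β) block of the Fisher information equals μ ∇h ∇h' / ( h (1 + α^{-1} μ h) ), with no contribution from the second derivatives of h. -/

import Mathlib

open MeasureTheory Set

/-- The negative binomial pmf with mean parameter `m > 0` and shape parameter `α > 0`. -/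
noncomputable def negBinom (α m : ℝ) (y : ℕ) : ℝ :=
  Real.Gamma (α + y) * α ^ α * m ^ y /
    (Real.Gamma α * y.factorial * (α + m) ^ (α + (y : ℝ)))

lemma nb_integrable_aux {a r : ℝ} (ha : 0 < a) (hr : 0 < r) :
    IntegrableOn (fun t : ℝ => t ^ (a - 1) * Real.exp (-(r * t))) (Ioi 0) := by
  have h := integrableOn_rpow_mul_exp_neg_mul_rpow (p := 1) (s := a - 1) (b := r)
    (by linarith) zero_lt_one hr
  refine h.congr_fun (fun t ht => ?_) measurableSet_Ioi
  simp only [Real.rpow_one]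
  ring_nf

lemma nb_lint_eq {a r : ℝ} (ha : 0 < a) (hr : 0 < r) :
    ∫⁻ t in Ioi 0, ENNReal.ofReal (t ^ (a - 1) * Real.exp (-(r * t))) =
      ENNReal.ofReal ((1 / r) ^ a * Real.Gamma a) := by
  rw [← Real.integral_rpow_mul_exp_neg_mul_Ioi ha hr]
  refine (ofReal_integral_eq_lintegral_ofReal (nb_integrable_aux ha hr) ?_).symm
  refine (ae_restrict_iff' measurableSet_Ioi).2 (ae_of_all _ fun t ht => ?_)
  have ht' : (0 : ℝ) < t := ht
  positivity

/-- Generalized binomial series. -/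
lemma nb_key {a p : ℝ} (ha : 0 < a) (hp0 : 0 ≤ p) (hp1 : p < 1) :
    HasSum (fun y : ℕ => Real.Gamma (a + y) / (Real.Gamma a * y.factorial) * p ^ y)
      ((1 - p) ^ (-a) : ℝ) := by
  have h1p : (0 : ℝ) < 1 - p := by linarith
  set F : ℕ → ℝ := fun y => Real.Gamma (a + y) * p ^ y / y.factorial with hF
  set C : ℝ := (1 / (1 - p)) ^ a * Real.Gamma a with hC
  set g : ℕ → ℝ → ℝ := fun y t => t ^ (a - 1) * Real.exp (-t) * ((p * t) ^ y / y.factorial)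
    with hg
  have hFnn : ∀ y, 0 ≤ F y := by
    intro y
    have := Real.Gamma_pos_of_pos (by positivity : (0:ℝ) < a + y)
    positivity
  have hCnn : 0 ≤ C := by
    have := Real.Gamma_pos_of_pos ha
    positivity
  -- step 1 : each term as a Lebesgue integral
  have step1 : ∀ y : ℕ, ∫⁻ t in Ioi 0, ENNReal.ofReal (g y t) = ENNReal.ofReal (F y) := by
    intro y
    have hay : (0 : ℝ) < a + y := by positivity
    have hpt : ∀ t ∈ Ioi (0:ℝ),
        g y t = (p ^ y / y.factorial) * (t ^ (a + (y:ℝ) - 1) * Real.exp (-(1 * t))) := by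
      intro t ht
      have ht' : (0 : ℝ) < t := ht
      have h1 : (p * t) ^ y = p ^ y * t ^ y := mul_pow _ _ _
      have h2 : t ^ (a + (y:ℝ) - 1) = t ^ (a - 1) * (t : ℝ) ^ (y : ℕ) := by
        rw [← Real.rpow_natCast t y, ← Real.rpow_add ht']
        congr 1
        ring
      rw [hg]
      simp only []
      rw [h1, h2, one_mul]
      ring
    calc ∫⁻ t in Ioi 0, ENNReal.ofReal (g y t)
        = ∫⁻ t in Ioi 0, ENNReal.ofReal (p ^ y / y.factorial) *
            ENNReal.ofReal (t ^ (a + (y:ℝ) - 1) * Real.exp (-(1 * t))) := by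
          refine setLIntegral_congr_fun measurableSet_Ioi (fun t ht => ?_)
          rw [hpt t ht, ENNReal.ofReal_mul (by positivity)]
      _ = ENNReal.ofReal (p ^ y / y.factorial) *
            ∫⁻ t in Ioi 0, ENNReal.ofReal (t ^ (a + (y:ℝ) - 1) * Real.exp (-(1 * t))) :=
          lintegral_const_mul' _ _ ENNReal.ofReal_ne_top
      _ = ENNReal.ofReal (p ^ y / y.factorial) *
            ENNReal.ofReal ((1 / 1) ^ (a + (y:ℝ)) * Real.Gamma (a + y)) := by
          rw [nb_lint_eq hay one_pos]
      _ = ENNReal.ofReal (F y) := by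
          rw [← ENNReal.ofReal_mul (by positivity)]
          congr 1
          rw [hF]
          simp only [one_div, inv_one, Real.one_rpow, one_mul]
          ring
  -- measurability
  have hmeas : ∀ y : ℕ, AEMeasurable (fun t => ENNReal.ofReal (g y t))
      (volume.restrict (Ioi (0:ℝ))) := by
    intro y
    apply Measurable.aemeasurable
    apply ENNReal.measurable_ofReal.comp
    fun_prop
  -- pointwise sum over y, for t > 0
  have hpoint : ∀ t ∈ Ioi (0:ℝ),
      ∑' y : ℕ, ENNReal.ofReal (g y t) =
        ENNReal.ofReal (t ^ (a - 1) * Real.exp (-((1 - p) * t))) := by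
    intro t ht
    have ht' : (0 : ℝ) < t := ht
    have hexp : HasSum (fun y : ℕ => (p * t) ^ y / y.factorial) (Real.exp (p * t)) := by
      rw [Real.exp_eq_exp_ℝ]
      exact NormedSpace.expSeries_div_hasSum_exp (p * t)
    have hgs : HasSum (fun y => g y t)
        ((t ^ (a - 1) * Real.exp (-t)) * Real.exp (p * t)) := hexp.mul_left _
    have hnn : ∀ y : ℕ, 0 ≤ g y t := by
      intro y
      have : (0:ℝ) ≤ p * t := by positivity
      rw [hg]
      positivity
    rw [← ENNReal.ofReal_tsum_of_nonneg hnn hgs.summable, hgs.tsum_eq]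
    congr 1
    rw [mul_assoc, ← Real.exp_add]
    congr 1
    ring
  -- the chain
  have chain : ∑' y : ℕ, ENNReal.ofReal (F y) = ENNReal.ofReal C := by
    calc ∑' y : ℕ, ENNReal.ofReal (F y)
        = ∑' y : ℕ, ∫⁻ t in Ioi 0, ENNReal.ofReal (g y t) := by
          exact tsum_congr fun y => (step1 y).symm
      _ = ∫⁻ t in Ioi 0, ∑' y : ℕ, ENNReal.ofReal (g y t) := (lintegral_tsum hmeas).symm
      _ = ∫⁻ t in Ioi 0, ENNReal.ofReal (t ^ (a - 1) * Real.exp (-((1 - p) * t))) :=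
          setLIntegral_congr_fun measurableSet_Ioi hpoint
      _ = ENNReal.ofReal C := nb_lint_eq ha h1p
  -- summability and value of the real sum
  have hsummable : Summable F := by
    have hne : (∑' y : ℕ, ENNReal.ofReal (F y)) ≠ ⊤ := by
      rw [chain]; exact ENNReal.ofReal_ne_top
    have := ENNReal.summable_toReal hne
    refine this.congr fun y => ?_
    exact ENNReal.toReal_ofReal (hFnn y)
  have htsum : ∑' y, F y = C := by
    have h2 := ENNReal.ofReal_tsum_of_nonneg hFnn hsummable
    rw [chain] at h2
    exact (ENNReal.ofReal_eq_ofReal_iff (tsum_nonneg hFnn) hCnn).1 h2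
  have hFC : HasSum F C := htsum ▸ hsummable.hasSum
  -- massage into the stated form
  have hGa : Real.Gamma a ≠ 0 := (Real.Gamma_pos_of_pos ha).ne'
  have hmain : HasSum (fun y => F y * (Real.Gamma a)⁻¹) (C * (Real.Gamma a)⁻¹) :=
    hFC.mul_right _
  have heq : (fun y : ℕ => F y * (Real.Gamma a)⁻¹) =
      fun y : ℕ => Real.Gamma (a + y) / (Real.Gamma a * y.factorial) * p ^ y := by
    funext y
    have hy : ((y.factorial : ℝ)) ≠ 0 := Nat.cast_ne_zero.2 y.factorial_ne_zero
    rw [hF]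
    ring
  have hval : C * (Real.Gamma a)⁻¹ = (1 - p) ^ (-a) := by
    rw [hC, mul_assoc, mul_inv_cancel₀ hGa, mul_one, one_div,
      Real.inv_rpow h1p.le, ← Real.rpow_neg h1p.le]
  rw [← heq, ← hval]
  exact hmain

lemma hasSum_negBinom {α m : ℝ} (hα : 0 < α) (hm : 0 < m) :
    HasSum (negBinom α m) 1 := by
  have hA : (0:ℝ) < α + m := by linarith
  set p : ℝ := m / (α + m) with hp
  have hp0 : 0 ≤ p := by positivity
  have hp1 : p < 1 := by rw [hp, div_lt_one hA]; linarith
  have h1p : 1 - p = α / (α + m) := by rw [hp]; field_simp; ring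
  have h1p' : (0:ℝ) < 1 - p := by rw [h1p]; positivity
  have hkey := (nb_key hα hp0 hp1).mul_right ((1 - p) ^ α : ℝ)
  have hval : ((1 - p) ^ (-α) : ℝ) * (1 - p) ^ α = 1 := by
    rw [← Real.rpow_add h1p', neg_add_cancel, Real.rpow_zero]
  have heq : (fun y : ℕ =>
      Real.Gamma (α + y) / (Real.Gamma α * y.factorial) * p ^ y * (1 - p) ^ α)
      = negBinom α m := by
    funext y
    rw [negBinom, h1p, hp, div_pow, Real.div_rpow hα.le hA.le,
      Real.rpow_add hA α y, Real.rpow_natCast]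
    have h1 := (Real.Gamma_pos_of_pos hα).ne'
    have h2 : ((α+m) ^ α : ℝ) ≠ 0 := (Real.rpow_pos_of_pos hA α).ne'
    have h3 : ((α+m) : ℝ) ^ y ≠ 0 := pow_ne_zero _ hA.ne'
    have h4 : ((y.factorial : ℝ)) ≠ 0 := Nat.cast_ne_zero.2 y.factorial_ne_zero
    field_simp
  rw [heq, hval] at hkey
  exact hkey

lemma hasSum_mul_negBinom {α m : ℝ} (hα : 0 < α) (hm : 0 < m) :
    HasSum (fun y : ℕ => (y : ℝ) * negBinom α m y) m := by
  have hA : (0:ℝ) < α + m := by linarith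
  set p : ℝ := m / (α + m) with hp
  have hp0 : 0 ≤ p := by positivity
  have hp1 : p < 1 := by rw [hp, div_lt_one hA]; linarith
  have h1p : 1 - p = α / (α + m) := by rw [hp]; field_simp; ring
  have hα1 : (0:ℝ) < α + 1 := by linarith
  set K : ℝ := α * α ^ α * m / (α + m) ^ (α+1) with hK
  have hkey := (nb_key hα1 hp0 hp1).mul_right K
  have hAe : ((α+m) : ℝ) ^ (α+1) ≠ 0 := (Real.rpow_pos_of_pos hA _).ne'
  have hval : ((1 - p) ^ (-(α+1)) : ℝ) * K = m := by
    have e1 : ((1:ℝ) - p) ^ (-(α+1)) = (α+m) ^ (α+1) / α ^ (α+1) := by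
      rw [h1p, Real.rpow_neg (by positivity), Real.div_rpow hα.le hA.le, inv_div]
    have e2 : (α:ℝ) ^ (α+1) = α ^ α * α := by rw [Real.rpow_add hα, Real.rpow_one]
    rw [e1, e2, hK]
    have h2 : ((α : ℝ) ^ α) ≠ 0 := (Real.rpow_pos_of_pos hα _).ne'
    field_simp
  have heq : ∀ k : ℕ,
      Real.Gamma ((α+1) + k) / (Real.Gamma (α+1) * k.factorial) * p ^ k * K
      = ((k + 1 : ℕ) : ℝ) * negBinom α m (k+1) := by
    intro k
    have e0 : Real.Gamma (α + ((k+1 : ℕ) : ℝ)) = Real.Gamma ((α+1) + k) := by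
      congr 1; push_cast; ring
    have e1 : ((α+m) : ℝ) ^ (α + ((k+1 : ℕ) : ℝ)) = (α+m) ^ (α+1) * (α+m) ^ k := by
      rw [show (α + ((k+1 : ℕ) : ℝ)) = (α+1) + (k:ℝ) by push_cast; ring,
        Real.rpow_add hA, Real.rpow_natCast]
    rw [negBinom, e0, e1, Real.Gamma_add_one hα.ne', Nat.factorial_succ, hp, hK, div_pow]
    have h1 := (Real.Gamma_pos_of_pos hα).ne'
    have h3 : ((α+m) : ℝ) ^ k ≠ 0 := pow_ne_zero _ hA.ne'
    have h4 : ((k.factorial : ℝ)) ≠ 0 := Nat.cast_ne_zero.2 k.factorial_ne_zero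
    have h5 : (((k:ℕ) + 1 : ℕ) : ℝ) ≠ 0 := Nat.cast_ne_zero.2 (Nat.succ_ne_zero k)
    push_cast
    field_simp
    ring
  have hshift : HasSum (fun k : ℕ => (((k:ℕ) + 1 : ℕ) : ℝ) * negBinom α m (k+1)) m := by
    rw [funext heq, hval] at hkey
    exact hkey
  have := (hasSum_nat_add_iff (f := fun y : ℕ => (y : ℝ) * negBinom α m y) 1).mp
    (by simpa using hshift)
  simpa using this

theorem fisher_info_beta_beta (α μ h : ℝ) (hα : 0 < α) (hμ : 0 < μ)
    (hh : h ∈ Set.Ioo (0 : ℝ) 1) :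
    (∑' y : ℕ, negBinom α (μ * h) y *
        ((y : ℝ) / h - (α + y) * μ / (α + μ * h)) = 0) ∧
    (∑' y : ℕ, negBinom α (μ * h) y *
        ((y : ℝ) / h ^ 2 - (α + y) * μ ^ 2 / (α + μ * h) ^ 2) =
      μ / (h * (1 + α⁻¹ * μ * h))) := by
  obtain ⟨hh0, hh1⟩ := hh
  have hm : (0:ℝ) < μ * h := by positivity
  have hA : (0:ℝ) < α + μ * h := by linarith
  have S0 := hasSum_negBinom hα hm
  have S1 := hasSum_mul_negBinom hα hm
  constructor
  · set A1 : ℝ := 1 / h - μ / (α + μ * h) with hA1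
    set B1 : ℝ := -(α * μ / (α + μ * h)) with hB1
    have hs : HasSum (fun y : ℕ => negBinom α (μ * h) y *
        ((y : ℝ) / h - (α + y) * μ / (α + μ * h))) (A1 * (μ * h) + B1 * 1) := by
      have h2 := (S1.mul_left A1).add (S0.mul_left B1)
      refine HasSum.congr_fun h2 fun y => ?_
      rw [hA1, hB1]
      ring
    rw [hs.tsum_eq, hA1, hB1]
    field_simp
    ring
  · set A2 : ℝ := 1 / h ^ 2 - μ ^ 2 / (α + μ * h) ^ 2 with hA2
    set B2 : ℝ := -(α * μ ^ 2 / (α + μ * h) ^ 2) with hB2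
    have hs : HasSum (fun y : ℕ => negBinom α (μ * h) y *
        ((y : ℝ) / h ^ 2 - (α + y) * μ ^ 2 / (α + μ * h) ^ 2)) (A2 * (μ * h) + B2 * 1) := by
      have h2 := (S1.mul_left A2).add (S0.mul_left B2)
      refine HasSum.congr_fun h2 fun y => ?_
      rw [hA2, hB2]
      ring
    rw [hs.tsum_eq, hA2, hB2]
    have hd : (0:ℝ) < 1 + α⁻¹ * μ * h := by positivity
    field_simp
    ring
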